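/- Let f : ℝ → ℝ be convex and differentiable with f(1) = 0, and let δ > 0. For p₁ ∈ (0,1] define V(p₁) = sup { p₁·r₁ : r₀ ≥ 0, r₁ ≥ 0, (1−p₁) f(r₀) + p₁ f(r₁) ≤ δ, (1−p₁) r₀ + p₁ r₁ = 1 }. Then V(p₁) ≤ 1 for all p₁ ∈ (0,1], and for any 0 < p₁ < p₁' ≤ 1: (i) if V(p₁) < 1 then V(p₁) < V(p₁'); (ii) if V(p₁) = 1 then V(p₁') = 1. In particular V is non-decreasing on (0,1] and strictly increasing on the region where it is below 1. -/

import Mathlib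

/-- `Vrisk f δ p₁` is the worst-case reweighted 0-1 risk when a fraction `p₁` of the mass is
misclassified, with weights `(r₀, r₁)` on the correctly and incorrectly classified parts
constrained by an `f`-divergence budget `δ`. -/
noncomputable def Vrisk (f : ℝ → ℝ) (δ p₁ : ℝ) : ℝ :=
  sSup {x | ∃ r₀ r₁ : ℝ, 0 ≤ r₀ ∧ 0 ≤ r₁ ∧
    (1 - p₁) * f r₀ + p₁ * f r₁ ≤ δ ∧ (1 - p₁) * r₀ + p₁ * r₁ = 1 ∧ x = p₁ * r₁}

lemma Vset_le_one (f : ℝ → ℝ) (δ : ℝ) {p x : ℝ} (hp : p ≤ 1)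
    (hx : x ∈ {x | ∃ r₀ r₁ : ℝ, 0 ≤ r₀ ∧ 0 ≤ r₁ ∧
      (1 - p) * f r₀ + p * f r₁ ≤ δ ∧ (1 - p) * r₀ + p * r₁ = 1 ∧ x = p * r₁}) : x ≤ 1 := by
  obtain ⟨r₀, r₁, h0, h1, _, hsum, hxv⟩ := hx
  nlinarith [mul_nonneg (by linarith : (0:ℝ) ≤ 1 - p) h0]

lemma Vset_self_mem (f : ℝ → ℝ) {δ : ℝ} (hf1 : f 1 = 0) (hδ : 0 ≤ δ) (p : ℝ) :
    p ∈ {x | ∃ r₀ r₁ : ℝ, 0 ≤ r₀ ∧ 0 ≤ r₁ ∧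
      (1 - p) * f r₀ + p * f r₁ ≤ δ ∧ (1 - p) * r₀ + p * r₁ = 1 ∧ x = p * r₁} := by
  exact ⟨1, 1, zero_le_one, zero_le_one, by rw [hf1]; linarith, by ring, by ring⟩

lemma Vrisk_le_one (f : ℝ → ℝ) {δ : ℝ} (hf1 : f 1 = 0) (hδ : 0 ≤ δ) {p : ℝ} (hp : p ≤ 1) :
    Vrisk f δ p ≤ 1 :=
  csSup_le ⟨p, Vset_self_mem f hf1 hδ p⟩ (fun _ hx => Vset_le_one f δ hp hx)

lemma Vrisk_key (f : ℝ → ℝ) (hconv : ConvexOn ℝ Set.univ f) (hf1 : f 1 = 0)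
    {δ : ℝ} (hδ : 0 ≤ δ) {p p' : ℝ} (hp : 0 < p) (hpp : p < p') (hp1 : p' ≤ 1) :
    Vrisk f δ p + (p' - p) / (1 - p) * (1 - Vrisk f δ p) ≤ Vrisk f δ p' := by
  have hp'pos : 0 < p' := hp.trans hpp
  have h1p : 0 < 1 - p := by linarith
  have h1p' : (0:ℝ) ≤ 1 - p' := by linarith
  have hcnn : 0 ≤ (p' - p) / (1 - p) := div_nonneg (by linarith) h1p.le
  have hVle1 : Vrisk f δ p ≤ 1 := Vrisk_le_one f hf1 hδ (by linarith)
  have hbdd : BddAbove {x | ∃ r₀ r₁ : ℝ, 0 ≤ r₀ ∧ 0 ≤ r₁ ∧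
      (1 - p) * f r₀ + p * f r₁ ≤ δ ∧ (1 - p) * r₀ + p * r₁ = 1 ∧ x = p * r₁} :=
    ⟨1, fun _ hx => Vset_le_one f δ (by linarith) hx⟩
  have hbdd' : BddAbove {x | ∃ r₀ r₁ : ℝ, 0 ≤ r₀ ∧ 0 ≤ r₁ ∧
      (1 - p') * f r₀ + p' * f r₁ ≤ δ ∧ (1 - p') * r₀ + p' * r₁ = 1 ∧ x = p' * r₁} :=
    ⟨1, fun _ hx => Vset_le_one f δ hp1 hx⟩
  rw [← le_sub_iff_add_le]
  refine csSup_le ⟨p, Vset_self_mem f hf1 hδ p⟩ (fun x hx => ?_)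
  obtain ⟨r₀, r₁, h0, h1, hdiv, hsum, hxv⟩ := hx
  have hxVp : x ≤ Vrisk f δ p := le_csSup hbdd ⟨r₀, r₁, h0, h1, hdiv, hsum, hxv⟩
  -- the improved point at p'
  set r₁' : ℝ := (1 - (1 - p') * r₀) / p' with hr₁'
  have hmono0 : (1 - p') * r₀ ≤ (1 - p) * r₀ :=
    mul_le_mul_of_nonneg_right (by linarith) h0
  have hub : (1 - p') * r₀ ≤ 1 := by nlinarith [mul_nonneg hp.le h1]
  have hr₁'nn : 0 ≤ r₁' := div_nonneg (by linarith) hp'pos.le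
  have harg : ((p' - p) / p') • r₀ + (p / p') • r₁ = r₁' := by
    rw [smul_eq_mul, smul_eq_mul, hr₁']
    field_simp
    nlinarith [hsum]
  have hc := hconv.2 (Set.mem_univ r₀) (Set.mem_univ r₁)
    (div_nonneg (by linarith : (0:ℝ) ≤ p' - p) hp'pos.le)
    (div_nonneg hp.le hp'pos.le)
    (by field_simp; ring)
  rw [harg] at hc
  rw [smul_eq_mul, smul_eq_mul] at hc
  have h4 : p' * f r₁' ≤ p' * ((p' - p) / p' * f r₀ + p / p' * f r₁) :=
    mul_le_mul_of_nonneg_left hc hp'pos.le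
  have h5 : p' * ((p' - p) / p' * f r₀ + p / p' * f r₁) = (p' - p) * f r₀ + p * f r₁ := by
    field_simp
  have hdiv' : (1 - p') * f r₀ + p' * f r₁' ≤ δ := by linarith
  have hsum' : (1 - p') * r₀ + p' * r₁' = 1 := by
    rw [hr₁']; field_simp; ring
  have hmem' : 1 - (1 - p') * r₀ ∈ {x | ∃ r₀ r₁ : ℝ, 0 ≤ r₀ ∧ 0 ≤ r₁ ∧
      (1 - p') * f r₀ + p' * f r₁ ≤ δ ∧ (1 - p') * r₀ + p' * r₁ = 1 ∧ x = p' * r₁} :=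
    ⟨r₀, r₁', h0, hr₁'nn, hdiv', hsum', by rw [hr₁']; field_simp⟩
  have hle' : 1 - (1 - p') * r₀ ≤ Vrisk f δ p' := le_csSup hbdd' hmem'
  -- x' - x = (p'-p) * r₀, and r₀ = (1-x)/(1-p)
  have hxval : 1 - x = (1 - p) * r₀ := by linear_combination -hsum - hxv
  have hstep : (p' - p) / (1 - p) * (1 - Vrisk f δ p) ≤ (p' - p) * r₀ := by
    have h6 : (p' - p) / (1 - p) * (1 - Vrisk f δ p) ≤ (p' - p) / (1 - p) * (1 - x) :=
      mul_le_mul_of_nonneg_left (by linarith) hcnn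
    have h7 : (p' - p) / (1 - p) * (1 - x) = (p' - p) * r₀ := by
      rw [hxval]; field_simp
    linarith
  have : 1 - (1 - p') * r₀ = x + (p' - p) * r₀ := by linear_combination -hsum - hxv
  linarith

/-- `V(p₁) ≤ 1` on `(0,1]`; `V` is strictly increasing where it is below `1`, constantly `1`
once it reaches `1`, and in particular non-decreasing on `(0,1]`. -/
theorem stmt3 (f : ℝ → ℝ) (hconv : ConvexOn ℝ Set.univ f) (hdiff : Differentiable ℝ f)
    (hf1 : f 1 = 0) (δ : ℝ) (hδ : 0 < δ) :
    (∀ p₁ ∈ Set.Ioc (0 : ℝ) 1, Vrisk f δ p₁ ≤ 1) ∧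
    (∀ p₁ p₁' : ℝ, 0 < p₁ → p₁ < p₁' → p₁' ≤ 1 →
      (Vrisk f δ p₁ < 1 → Vrisk f δ p₁ < Vrisk f δ p₁') ∧
      (Vrisk f δ p₁ = 1 → Vrisk f δ p₁' = 1)) ∧
    MonotoneOn (Vrisk f δ) (Set.Ioc (0 : ℝ) 1) := by
  refine ⟨fun p hp => Vrisk_le_one f hf1 hδ.le hp.2, ?_, ?_⟩
  · intro p p' hp hpp hp1
    have hkey := Vrisk_key f hconv hf1 hδ.le hp hpp hp1
    have hcpos : 0 < (p' - p) / (1 - p) := div_pos (by linarith) (by linarith)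
    constructor
    · intro hlt
      nlinarith
    · intro heq
      have h1 : Vrisk f δ p' ≤ 1 := Vrisk_le_one f hf1 hδ.le hp1
      rw [heq] at hkey
      simp at hkey
      linarith
  · intro p hp q hq hpq
    rcases eq_or_lt_of_le hpq with h | h
    · rw [h]
    · have hkey := Vrisk_key f hconv hf1 hδ.le hp.1 h hq.2
      have hVle1 : Vrisk f δ p ≤ 1 := Vrisk_le_one f hf1 hδ.le hp.2
      have hcnn : 0 ≤ (q - p) / (1 - p) := div_nonneg (by linarith [hq.2]) (by linarith [hq.2])
      have h8 := mul_nonneg hcnn (by linarith : (0:ℝ) ≤ 1 - Vrisk f δ p)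
      linarith
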